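/- Let L be a Lie algebra over a field F of characteristic 2, let n ≥ 1, and for i = 0, …, n let mᵢ : L × L → L be alternating F-bilinear maps and ωᵢ : L → L maps satisfying ωᵢ(x+y) = ωᵢ(x) + ωᵢ(y) + mᵢ(x,y) for all x, y ∈ L. Define Obs¹(x,y,z) = Σ_{i=1}^{n} ( mᵢ(x, m_{n+1−i}(y,z)) + mᵢ(y, m_{n+1−i}(z,x)) + mᵢ(z, m_{n+1−i}(x,y)) ) and Obs²(x,y) = Σ_{i=1}^{n} ( mᵢ(y, ω_{n+1−i}(x)) + mᵢ(m_{n+1−i}(y,x), x) ). Then for all x₁, x₂, y ∈ L: Obs²(x₁ + x₂, y) = Obs²(x₁, y) + Obs²(x₂, y) + Obs¹(x₁, x₂, y). -/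

import Mathlib

/-- The obstruction pair `(Obs¹, Obs²)` of an `n`-th order restricted deformation in
characteristic 2 is a restricted 3-cochain:
`Obs² (x₁+x₂, y) = Obs² (x₁, y) + Obs² (x₂, y) + Obs¹ (x₁, x₂, y)`. -/
theorem statement15 (F : Type*) [Field F] [CharP F 2]
    (L : Type*) [LieRing L] [LieAlgebra F L]
    (n : ℕ) (hn : 1 ≤ n)
    (m : ℕ → L →ₗ[F] L →ₗ[F] L) (w : ℕ → L → L)
    (halt : ∀ i ≤ n, ∀ x : L, m i x x = 0)
    (hadd : ∀ i ≤ n, ∀ x y : L, w i (x + y) = w i x + w i y + m i x y)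
    (O1 : L → L → L → L)
    (hO1 : ∀ x y z : L, O1 x y z = ∑ i ∈ Finset.Icc 1 n,
      (m i x (m (n + 1 - i) y z) + m i y (m (n + 1 - i) z x) + m i z (m (n + 1 - i) x y)))
    (O2 : L → L → L)
    (hO2 : ∀ x y : L, O2 x y = ∑ i ∈ Finset.Icc 1 n,
      (m i y (w (n + 1 - i) x) + m i (m (n + 1 - i) y x) x)) :
    ∀ x₁ x₂ y : L, O2 (x₁ + x₂) y = O2 x₁ y + O2 x₂ y + O1 x₁ x₂ y := by
  have h2 : ∀ c : L, c + c = 0 := by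
    intro c
    have : ((2 : F)) • c = 0 := by
      rw [show (2 : F) = 0 from CharP.cast_eq_zero F 2, zero_smul]
    calc c + c = (1 : F) • c + (1 : F) • c := by rw [one_smul]
      _ = ((1 : F) + 1) • c := by rw [add_smul]
      _ = (2 : F) • c := by norm_num
      _ = 0 := this
  have hsym : ∀ i ≤ n, ∀ a b : L, m i a b = m i b a := by
    intro i hi a b
    have h := halt i hi (a + b)
    simp only [map_add, LinearMap.add_apply, halt i hi a, halt i hi b] at h
    have h' : m i a b + m i b a = 0 := by
      rw [← h]; abel
    have hneg : ∀ c : L, -c = c := fun c => neg_eq_of_add_eq_zero_left (h2 c)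
    have := eq_neg_of_add_eq_zero_left h'
    rwa [hneg] at this
  intro x₁ x₂ y
  rw [hO2, hO2, hO2, hO1, ← Finset.sum_add_distrib, ← Finset.sum_add_distrib]
  apply Finset.sum_congr rfl
  intro i hi
  obtain ⟨hi1, hi2⟩ := Finset.mem_Icc.mp hi
  set k := n + 1 - i with hk
  have hkn : k ≤ n := by omega
  rw [hadd k hkn x₁ x₂]
  simp only [map_add, LinearMap.add_apply]
  rw [show (m i) x₁ ((m k) x₂ y) = (m i) ((m k) y x₂) x₁ by
    rw [hsym i hi2, hsym k hkn x₂ y],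
    show (m i) x₂ ((m k) y x₁) = (m i) ((m k) y x₁) x₂ from hsym i hi2 _ _]
  abel
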